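/- Let G be an infinite FC-group with ω(G) = 2. Then G is abelian and is either a torsion-free divisible abelian group (the additive group of a rational vector space) or an infinite elementary abelian p-group for some prime p. -/

import Mathlib

/-- The number of automorphism orbits of a group `G`: the number of orbits of the
natural action of `Aut(G)` on `G`. -/
noncomputable def omegaOrbits (G : Type*) [Group G] : ℕ :=
  Nat.card (Quotient (MulAction.orbitRel (MulAut G) G))

/-- `G` is an FC-group: every element has a finite conjugacy class. -/
def IsFCGroup (G : Type*) [Group G] : Prop :=
  ∀ g : G, {h : G | IsConj g h}.Finite

/-- `G` has finitely many automorphism orbits. -/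
def HasFinitelyManyAutOrbits (G : Type*) [Group G] : Prop :=
  Finite (Quotient (MulAction.orbitRel (MulAut G) G))

open scoped commutatorElement

section Aux

variable {G : Type*} [Group G]

/-- From `ω(G) = 2`, the automorphism group acts transitively on nontrivial elements. -/
lemma aux_transitive (h2 : omegaOrbits G = 2) :
    ∀ a b : G, a ≠ 1 → b ≠ 1 → ∃ φ : MulAut G, φ a = b := by
  intro a b ha hb
  have h2' : Nat.card (Quotient (MulAction.orbitRel (MulAut G) G)) = 2 := h2
  have hne : ∀ c : G, c ≠ 1 →
      Quotient.mk (MulAction.orbitRel (MulAut G) G) c ≠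
        Quotient.mk (MulAction.orbitRel (MulAut G) G) (1 : G) := by
    intro c hc h
    have hr : c ∈ MulAction.orbit (MulAut G) (1 : G) := Quotient.exact h
    obtain ⟨φ, hφ⟩ := hr
    simp only [MulAut.smul_def, map_one] at hφ
    exact hc hφ.symm
  obtain ⟨y, -, hyu⟩ :=
    (Nat.card_eq_two_iff' (Quotient.mk (MulAction.orbitRel (MulAut G) G) (1 : G))).mp h2'
  have hay := hyu _ (hne a ha)
  have hby := hyu _ (hne b hb)
  have hab : Quotient.mk (MulAction.orbitRel (MulAut G) G) b =
      Quotient.mk (MulAction.orbitRel (MulAut G) G) a := by rw [hay, hby]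
  have hr : b ∈ MulAction.orbit (MulAut G) a := Quotient.exact hab
  obtain ⟨φ, hφ⟩ := hr
  simp only [MulAut.smul_def] at hφ
  exact ⟨φ, hφ⟩

lemma conj_image (φ : MulAut G) (a : G) :
    φ '' conjugatesOf a = conjugatesOf (φ a) := by
  ext y
  constructor
  · rintro ⟨z, hz, rfl⟩
    exact φ.toMonoidHom.map_isConj hz
  · intro hy
    refine ⟨φ.symm y, ?_, by simp⟩
    have h2 : IsConj (φ.symm (φ a)) (φ.symm y) := φ.symm.toMonoidHom.map_isConj hy
    rw [MulEquiv.symm_apply_apply] at h2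
    exact h2

lemma index_centralizer_eq (g : G) :
    (Subgroup.centralizer {g}).index = (conjugatesOf g).ncard := by
  have e := Subgroup.index_comap_of_surjective (H := MulAction.stabilizer (ConjAct G) g)
    (f := (ConjAct.toConjAct : G ≃* ConjAct G).toMonoidHom) ConjAct.toConjAct.surjective
  rw [show (Subgroup.centralizer {g}).index = (MulAction.stabilizer (ConjAct G) g).index from by
      rw [Subgroup.centralizer_eq_comap_stabilizer]; exact e,
    MulAction.index_stabilizer]
  congr 1
  ext h
  rw [ConjAct.mem_orbit_conjAct]
  exact isConj_comm

lemma centralizer_singleton_finiteIndex (hFC : IsFCGroup G) (g : G) :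
    (Subgroup.centralizer {g}).FiniteIndex := by
  constructor
  rw [index_centralizer_eq]
  intro h
  rw [Set.ncard_eq_zero (s := conjugatesOf g) (hFC g)] at h
  exact absurd (h ▸ (mem_conjugatesOf_self : g ∈ conjugatesOf g)) (Set.notMem_empty g)

lemma centralizer_finite_finiteIndex (hFC : IsFCGroup G) {S : Set G} (hS : S.Finite) :
    (Subgroup.centralizer S).FiniteIndex := by
  refine Set.Finite.induction_on
    (motive := fun s _ => (Subgroup.centralizer s).FiniteIndex) S hS ?_ ?_
  · show (Subgroup.centralizer (∅ : Set G)).FiniteIndex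
    rw [Subgroup.centralizer_eq_top_iff_subset.mpr (Set.empty_subset _)]
    infer_instance
  · intro a s _ _ ih
    show (Subgroup.centralizer (insert a s)).FiniteIndex
    have h : Subgroup.centralizer (insert a s) =
        Subgroup.centralizer {a} ⊓ Subgroup.centralizer s := by
      ext k
      simp only [Subgroup.mem_centralizer_iff, Set.mem_insert_iff, Subgroup.mem_inf,
        Set.mem_singleton_iff, forall_eq]
      constructor
      · intro h; exact ⟨h a (Or.inl rfl), fun x hx => h x (Or.inr hx)⟩
      · rintro ⟨h1, h2⟩ x hx
        rcases hx with rfl | hx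
        · exact h1
        · exact h2 x hx
    rw [h]
    haveI := centralizer_singleton_finiteIndex hFC a
    haveI := ih
    infer_instance

lemma centralizer_le_closure (S : Set G) :
    Subgroup.centralizer S ≤ Subgroup.centralizer ((Subgroup.closure S : Subgroup G) : Set G) := by
  intro k hk
  rw [Subgroup.mem_centralizer_iff] at hk ⊢
  intro h hh
  have hle : Subgroup.closure S ≤ Subgroup.centralizer {k} := by
    rw [Subgroup.closure_le]
    intro s hs
    rw [SetLike.mem_coe, Subgroup.mem_centralizer_singleton_iff]
    exact hk s hs
  have := hle hh
  rw [Subgroup.mem_centralizer_singleton_iff] at this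
  exact this

lemma commutator_eq_of_central {z w : G} (hz : z ∈ Subgroup.center G)
    (hw : w ∈ Subgroup.center G) (a b : G) : ⁅a * z, b * w⁆ = ⁅a, b⁆ := by
  have hz' := Subgroup.mem_center_iff.mp hz
  have hw' := Subgroup.mem_center_iff.mp hw
  have key : ∀ u : G, ∀ x : G, (u * z) * x * (u * z)⁻¹ = u * x * u⁻¹ := by
    intro u x
    have hx : z * x * z⁻¹ = x := by rw [← hz' x, mul_inv_cancel_right]
    rw [mul_inv_rev]
    calc u * z * x * (z⁻¹ * u⁻¹) = u * (z * x * z⁻¹) * u⁻¹ := by group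
    _ = u * x * u⁻¹ := by rw [hx]
  have h1 : ⁅a * z, b * w⁆ = ((a * z) * (b * w) * (a * z)⁻¹) * (b * w)⁻¹ := by
    rw [commutatorElement_def]
  rw [h1, key a (b * w), commutatorElement_def, mul_inv_rev]
  have hwa : w * a⁻¹ = a⁻¹ * w := (hw' a⁻¹).symm
  calc a * (b * w) * a⁻¹ * (w⁻¹ * b⁻¹)
      = a * b * (w * a⁻¹) * w⁻¹ * b⁻¹ := by group
    _ = a * b * (a⁻¹ * w) * w⁻¹ * b⁻¹ := by rw [hwa]
    _ = a * b * a⁻¹ * b⁻¹ := by group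

lemma finite_commutatorSet_of_finite_quot_center
    (H : Type*) [Group H] [Finite (H ⧸ Subgroup.center H)] :
    Finite (commutatorSet H) := by
  have hsub : commutatorSet H ⊆
      Set.range (fun q : (H ⧸ Subgroup.center H) × (H ⧸ Subgroup.center H) =>
        ⁅q.1.out, q.2.out⁆) := by
    rintro - ⟨a, b, rfl⟩
    obtain ⟨z, hz⟩ := QuotientGroup.mk_out_eq_mul (Subgroup.center H) a
    obtain ⟨w, hw⟩ := QuotientGroup.mk_out_eq_mul (Subgroup.center H) b
    refine ⟨(QuotientGroup.mk a, QuotientGroup.mk b), ?_⟩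
    simp only
    rw [hz, hw, commutator_eq_of_central z.2 w.2]
  exact (Set.finite_range _).subset hsub |>.to_subtype

/-- In an FC group, each commutator has finite order. -/
lemma commutator_pow_eq_one (hFC : IsFCGroup G) (x y : G) :
    ∃ n : ℕ, 0 < n ∧ (x * y * x⁻¹ * y⁻¹) ^ n = 1 := by
  set H := Subgroup.closure ({x, y} : Set G) with hH
  have hx : x ∈ H := Subgroup.subset_closure (by simp)
  have hy : y ∈ H := Subgroup.subset_closure (by simp)
  haveI : (Subgroup.centralizer ({x, y} : Set G)).FiniteIndex :=
    centralizer_finite_finiteIndex hFC (Set.toFinite _)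
  have hle : (Subgroup.centralizer ({x, y} : Set G)).subgroupOf H ≤ Subgroup.center H := by
    rintro ⟨k, hkH⟩ hk
    rw [Subgroup.mem_subgroupOf] at hk
    rw [Subgroup.mem_center_iff]
    rintro ⟨h, hh⟩
    have hk2 := centralizer_le_closure ({x, y} : Set G) hk
    rw [Subgroup.mem_centralizer_iff] at hk2
    exact Subtype.ext (hk2 h hh)
  haveI : (Subgroup.center H).FiniteIndex := Subgroup.finiteIndex_of_le hle
  haveI : Finite (H ⧸ Subgroup.center H) := Subgroup.finite_quotient_of_finiteIndex
  haveI : Finite (commutatorSet H) := finite_commutatorSet_of_finite_quot_center H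
  set c : H := ⟨x, hx⟩ * ⟨y, hy⟩ * ⟨x, hx⟩⁻¹ * ⟨y, hy⟩⁻¹ with hc
  have hcmem : c ∈ _root_.commutator H := by
    rw [commutator_def]
    have : c = ⁅(⟨x, hx⟩ : H), (⟨y, hy⟩ : H)⁆ := by rw [commutatorElement_def]
    rw [this]
    exact Subgroup.commutator_mem_commutator (Subgroup.mem_top _) (Subgroup.mem_top _)
  set c' : ↥(_root_.commutator H) := ⟨c, hcmem⟩ with hc'
  refine ⟨orderOf c', orderOf_pos c', ?_⟩
  have h1 : c' ^ orderOf c' = 1 := pow_orderOf_eq_one c'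
  have h2 : c ^ orderOf c' = 1 := by
    have h := congrArg (Subtype.val) h1
    rwa [SubmonoidClass.coe_pow, OneMemClass.coe_one] at h
  have h3 : ((c : G)) ^ orderOf c' = 1 := by
    have h := congrArg (Subtype.val) h2
    simpa using h
  simpa [hc] using h3

/-- Partition counting: a finite conjugation-closed set all of whose members have
conjugacy class of size `n` has cardinality divisible by `n`. -/
lemma dvd_ncard_of_conj_closed (n : ℕ) :
    ∀ (N : ℕ) (T : Set G), T.Finite → T.ncard ≤ N →
      (∀ x ∈ T, conjugatesOf x ⊆ T) →
      (∀ x ∈ T, (conjugatesOf x).ncard = n) → n ∣ T.ncard := by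
  intro N
  induction N with
  | zero =>
      intro T hfin hle _ _
      simp [Nat.le_zero.mp hle]
  | succ N ih =>
      intro T hfin hle hclosed hsize
      rcases T.eq_empty_or_nonempty with rfl | ⟨x, hx⟩
      · simp
      · have hCsub : conjugatesOf x ⊆ T := hclosed x hx
        have hCn : (conjugatesOf x).ncard = n := hsize x hx
        have hpos : 0 < n := by
          rw [← hCn]
          exact (Set.ncard_pos (hfin.subset hCsub)).mpr ⟨x, mem_conjugatesOf_self⟩
        have hsum : (T \ conjugatesOf x).ncard + n = T.ncard := by
          rw [← hCn]
          exact Set.ncard_diff_add_ncard_of_subset hCsub hfin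
        have hclosed' : ∀ y ∈ T \ conjugatesOf x, conjugatesOf y ⊆ T \ conjugatesOf x := by
          rintro y ⟨hyT, hyC⟩ z hz
          refine ⟨hclosed y hyT hz, fun hzC => hyC ?_⟩
          exact IsConj.trans (hzC : IsConj x z) (hz : IsConj y z).symm
        have ihres : n ∣ (T \ conjugatesOf x).ncard :=
          ih _ hfin.diff (by omega) hclosed' (fun y hy => hsize y hy.1)
        rw [← hsum]
        exact Nat.dvd_add ihres dvd_rfl

end Aux

theorem stmt7 (G : Type*) [Group G] [Infinite G] (hFC : IsFCGroup G)
    (h2 : omegaOrbits G = 2) :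
    (∀ a b : G, a * b = b * a) ∧
      (((∀ g : G, g ≠ 1 → ∀ n : ℕ, 0 < n → g ^ n ≠ 1) ∧
          (∀ g : G, ∀ n : ℕ, 0 < n → ∃ x : G, x ^ n = g)) ∨
        (∃ p : ℕ, p.Prime ∧ ∀ g : G, g ^ p = 1)) := by
  have htrans := aux_transitive h2
  by_cases hTF : ∀ g : G, g ≠ 1 → ∀ n : ℕ, 0 < n → g ^ n ≠ 1
  · -- torsion-free case
    have hab : ∀ a b : G, a * b = b * a := by
      intro x y
      obtain ⟨n, hn, hcn⟩ := commutator_pow_eq_one hFC x y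
      by_cases h1 : x * y * x⁻¹ * y⁻¹ = 1
      · have : x * y * x⁻¹ = y := by
          have := mul_eq_one_iff_eq_inv.mp h1
          rw [this, inv_inv]
        calc x * y = (x * y * x⁻¹) * x := by group
          _ = y * x := by rw [this]
      · exact absurd hcn (hTF _ h1 n hn)
    refine ⟨hab, Or.inl ⟨hTF, ?_⟩⟩
    intro g m hm
    rcases eq_or_ne g 1 with rfl | hg1
    · exact ⟨1, one_pow m⟩
    · have hgm : g ^ m ≠ 1 := hTF g hg1 m hm
      obtain ⟨φ, hφ⟩ := htrans (g ^ m) g hgm hg1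
      exact ⟨φ g, by rw [← map_pow, hφ]⟩
  · -- torsion case
    push_neg at hTF
    obtain ⟨g0, hg0, m0, hm0, hg0m⟩ := hTF
    have hford : IsOfFinOrder g0 := isOfFinOrder_iff_pow_eq_one.mpr ⟨m0, hm0, hg0m⟩
    have hmpos : 0 < orderOf g0 := hford.orderOf_pos
    have hm1 : orderOf g0 ≠ 1 := by simpa [orderOf_eq_one_iff] using hg0
    set p := (orderOf g0).minFac with hpdef
    have hp : p.Prime := Nat.minFac_prime hm1
    have hdp : p ∣ orderOf g0 := Nat.minFac_dvd _
    set h := g0 ^ (orderOf g0 / p) with hhdef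
    have hdivpos : 0 < orderOf g0 / p :=
      Nat.div_pos (Nat.le_of_dvd hmpos hdp) hp.pos
    have hh1 : h ≠ 1 := by
      intro e
      rw [hhdef] at e
      have hdvd : orderOf g0 ∣ orderOf g0 / p := orderOf_dvd_of_pow_eq_one e
      have hlt : orderOf g0 / p < orderOf g0 := Nat.div_lt_self hmpos hp.one_lt
      have := Nat.le_of_dvd hdivpos hdvd
      omega
    have hhp : h ^ p = 1 := by
      rw [hhdef, ← pow_mul, Nat.div_mul_cancel hdp, pow_orderOf_eq_one]
    have hexp : ∀ x : G, x ^ p = 1 := by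
      intro x
      rcases eq_or_ne x 1 with rfl | hx
      · exact one_pow p
      · obtain ⟨φ, hφ⟩ := htrans h x hh1 hx
        rw [← hφ, ← map_pow, hhp, map_one]
    haveI : Fact p.Prime := ⟨hp⟩
    -- the common class size
    obtain ⟨g, hg⟩ := exists_ne (1 : G)
    set n := (conjugatesOf g).ncard with hndef
    have hsize : ∀ x : G, x ≠ 1 → (conjugatesOf x).ncard = n := by
      intro x hx
      obtain ⟨φ, hφ⟩ := htrans g x hg hx
      rw [← hφ, ← conj_image, Set.ncard_image_of_injective _ φ.injective]
    -- the finite normal subgroup M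
    set M := Subgroup.normalClosure ({g} : Set G) with hMdef
    have hMclosure : M = Subgroup.closure (Group.conjugatesOfSet ({g} : Set G)) := rfl
    have hconjeq : Group.conjugatesOfSet ({g} : Set G) = conjugatesOf g := by
      simp [Group.conjugatesOfSet]
    have hconjfin : (Group.conjugatesOfSet ({g} : Set G)).Finite := by
      rw [hconjeq]; exact hFC g
    have hMfgsub : M.FG := by
      rw [Subgroup.fg_iff]
      exact ⟨_, hMclosure.symm, hconjfin⟩
    haveI hMfg : Group.FG ↥M := (Group.fg_iff_subgroup_fg M).mpr hMfgsub
    set K := Subgroup.centralizer (Group.conjugatesOfSet ({g} : Set G)) with hKdef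
    haveI hKfi : K.FiniteIndex := centralizer_finite_finiteIndex hFC hconjfin
    have hKM : K ≤ Subgroup.centralizer (M : Set G) := by
      rw [hMclosure]
      exact centralizer_le_closure _
    have hle : K.subgroupOf M ≤ Subgroup.center ↥M := by
      rintro ⟨k, hkM⟩ hk
      rw [Subgroup.mem_subgroupOf] at hk
      rw [Subgroup.mem_center_iff]
      rintro ⟨m, hm⟩
      have := hKM hk
      rw [Subgroup.mem_centralizer_iff] at this
      exact Subtype.ext (this m hm)
    haveI : (Subgroup.center ↥M).FiniteIndex := Subgroup.finiteIndex_of_le hle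
    haveI : Finite (↥M ⧸ Subgroup.center ↥M) := Subgroup.finite_quotient_of_finiteIndex
    have htor : Monoid.IsTorsion ↥(Subgroup.center ↥M) := by
      intro z
      refine isOfFinOrder_iff_pow_eq_one.mpr ⟨p, hp.pos, ?_⟩
      apply Subtype.ext
      rw [SubmonoidClass.coe_pow]
      apply Subtype.ext
      rw [SubmonoidClass.coe_pow]
      exact hexp _
    haveI : Finite ↥(Subgroup.center ↥M) := by
      open scoped IsMulCommutative in exact CommGroup.finite_of_fg_torsion _ htor
    haveI hMfin : Finite ↥M :=
      Finite.of_equiv _ (Subgroup.groupEquivQuotientProdSubgroup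
        (s := Subgroup.center ↥M)).symm
    have hgM : g ∈ M := Subgroup.subset_normalClosure (Set.mem_singleton g)
    -- |M| = p ^ r with r ≥ 1
    have hPM : IsPGroup p ↥M := by
      intro m
      refine ⟨1, ?_⟩
      rw [pow_one]
      apply Subtype.ext
      rw [SubmonoidClass.coe_pow]
      exact hexp _
    obtain ⟨r, hr⟩ := IsPGroup.iff_card.mp hPM
    haveI : Nontrivial ↥M :=
      ⟨⟨⟨g, hgM⟩, 1, fun e => hg (by simpa [Subtype.ext_iff] using e)⟩⟩
    have hr1 : 1 ≤ r := by
      by_contra hr0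
      have : r = 0 := by omega
      rw [this, pow_zero] at hr
      have : 1 < Nat.card ↥M := Finite.one_lt_card
      omega
    -- n ∣ p ^ r - 1
    have hMsetfin : (M : Set G).Finite := M.carrier.toFinite
    have hcard : ((M : Set G)).ncard = p ^ r := by
      rw [← Nat.card_coe_set_eq]
      rw [← hr]
      rfl
    have hdvd1 : n ∣ p ^ r - 1 := by
      have h1M : (1 : G) ∈ (M : Set G) := M.one_mem
      have hTncard : ((M : Set G) \ {1}).ncard = p ^ r - 1 := by
        rw [Set.ncard_diff_singleton_of_mem h1M, hcard]
      rw [← hTncard]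
      refine dvd_ncard_of_conj_closed n (((M : Set G) \ {1}).ncard) _
        hMsetfin.diff le_rfl ?_ ?_
      · rintro x ⟨hxM, hx1⟩ z hz
        constructor
        · obtain ⟨c, hc⟩ := isConj_iff.mp hz
          exact hc ▸ Subgroup.normalClosure_normal.conj_mem x hxM c
        · intro hz1
          rw [Set.mem_singleton_iff] at hz1
          have hz' : IsConj x z := hz
          rw [hz1] at hz'
          exact hx1 (isConj_one_left.mp hz')
      · rintro x ⟨hxM, hx1⟩
        exact hsize x hx1
    -- n ∣ p ^ k
    haveI hKnormal : K.Normal := by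
      constructor
      intro k hk c
      rw [hKdef, Subgroup.mem_centralizer_iff] at hk ⊢
      intro x hx
      have hx' : c⁻¹ * x * c ∈ Group.conjugatesOfSet ({g} : Set G) := by
        have := Group.conj_mem_conjugatesOfSet (c := c⁻¹) hx
        simpa using this
      have hcomm := hk _ hx'
      calc x * (c * k * c⁻¹) = c * ((c⁻¹ * x * c) * k) * c⁻¹ := by group
        _ = c * (k * (c⁻¹ * x * c)) * c⁻¹ := by rw [hcomm]
        _ = (c * k * c⁻¹) * x := by group
    haveI : Finite (G ⧸ K) := Subgroup.finite_quotient_of_finiteIndex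
    have hQp : IsPGroup p (G ⧸ K) := by
      intro q
      refine ⟨1, ?_⟩
      rw [pow_one]
      induction q using QuotientGroup.induction_on with
      | H a =>
          show (QuotientGroup.mk' K a) ^ p = 1
          rw [← map_pow, hexp, map_one]
    obtain ⟨k, hk⟩ := IsPGroup.iff_card.mp hQp
    have hKC : K ≤ Subgroup.centralizer ({g} : Set G) := by
      refine hKM.trans (Subgroup.centralizer_le ?_)
      intro x hx
      rw [Set.mem_singleton_iff] at hx
      rw [hx]
      exact hgM
    have hdvd2 : n ∣ p ^ k := by
      have h1 : (Subgroup.centralizer ({g} : Set G)).index ∣ K.index :=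
        Dvd.intro_left _ (Subgroup.relIndex_mul_index hKC)
      have h2 : K.index = p ^ k := by rw [Subgroup.index_eq_card]; exact hk
      have h3 : n = (Subgroup.centralizer ({g} : Set G)).index :=
        (index_centralizer_eq g).symm
      rw [h3, ← h2]
      exact h1
    -- n = 1
    have hn1 : n = 1 := by
      have hcop : Nat.Coprime (p ^ k) (p ^ r - 1) := by
        apply Nat.Coprime.pow_left
        rw [hp.coprime_iff_not_dvd]
        intro hpd
        have hpr : p ∣ p ^ r := dvd_pow_self p (by omega)
        have : p ∣ p ^ r - (p ^ r - 1) := Nat.dvd_sub hpr hpd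
        have hone : p ^ r - (p ^ r - 1) = 1 := by
          have : 1 ≤ p ^ r := Nat.one_le_pow _ _ hp.pos
          omega
        rw [hone] at this
        exact hp.one_lt.ne' (Nat.dvd_one.mp this)
      have : n ∣ Nat.gcd (p ^ k) (p ^ r - 1) := Nat.dvd_gcd hdvd2 hdvd1
      rw [hcop] at this
      exact Nat.dvd_one.mp this
    -- conclude commutativity
    have hab : ∀ a b : G, a * b = b * a := by
      intro a b
      rcases eq_or_ne a 1 with rfl | ha
      · simp
      · have h1 : (conjugatesOf a).ncard = 1 := by rw [hsize a ha, hn1]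
        obtain ⟨c, hc⟩ := Set.ncard_eq_one.mp h1
        have haa : a ∈ conjugatesOf a := mem_conjugatesOf_self
        have hba : b * a * b⁻¹ ∈ conjugatesOf a := isConj_iff.mpr ⟨b, rfl⟩
        rw [hc, Set.mem_singleton_iff] at haa hba
        have : b * a * b⁻¹ = a := by rw [hba, haa]
        exact (mul_inv_eq_iff_eq_mul.mp this).symm
    exact ⟨hab, Or.inr ⟨p, hp, hexp⟩⟩
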